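/- Let Φ : Kⁿ → ℝᴹ be an indexed k-Janossy latent map, Φ(x₁,…,xₙ) = Σ_{1≤i₁,…,i_k≤n} φ_{i₁,…,i_k}(x_{i₁},…,x_{i_k}). Then for any base points a₁,…,a_k and increments y₁,…,y_k such that aᵢ + ηᵢyᵢ ∈ K for all ηᵢ ∈ {0,1}, the k-fold alternating sum Σ_{η∈{0,1}^k} (−1)^{|η|} Φ(a₁+η₁y₁,…,a_k+η_ky_k, x_{k+1},…,xₙ) is independent of the tail variables x_{k+1},…,xₙ. -/
import Mathlib


/-- The unit cube `[0,1]^d` in `ℝ^d`. -/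
def unitCube (d : ℕ) : Set (Fin d → ℝ) := {x | ∀ i, x i ∈ Set.Icc (0 : ℝ) 1}

section aux

variable {d n k M : ℕ}

/-- If some `I j₀` has value `≥ k`, then some index `m < k` is missed by `I`. -/
lemma exists_missed (hk : 1 ≤ k) (I : Fin k → Fin n) (j₀ : Fin k)
    (hj₀ : ¬ (I j₀ : ℕ) < k) : ∃ m : Fin k, ∀ j : Fin k, (I j : ℕ) ≠ (m : ℕ) := by
  classical
  by_contra h
  push_neg at h
  -- every m < k is hit by I
  have hsub : Finset.range k ⊆ Finset.univ.image (fun j : Fin k => (I j : ℕ)) := by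
    intro m hmr
    rw [Finset.mem_range] at hmr
    obtain ⟨j, hj⟩ := h ⟨m, hmr⟩
    exact Finset.mem_image.2 ⟨j, Finset.mem_univ _, hj⟩
  -- but the image misses nothing, yet also contains (I j₀ : ℕ) ≥ k,
  -- so it has at least k + 1 elements, contradiction with card ≤ k.
  have hmem : (I j₀ : ℕ) ∈ Finset.univ.image (fun j : Fin k => (I j : ℕ)) :=
    Finset.mem_image.2 ⟨j₀, Finset.mem_univ _, rfl⟩
  have hins : insert (I j₀ : ℕ) (Finset.range k) ⊆
      Finset.univ.image (fun j : Fin k => (I j : ℕ)) :=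
    Finset.insert_subset hmem hsub
  have h1 : k + 1 ≤ (Finset.univ.image (fun j : Fin k => (I j : ℕ))).card := by
    have := Finset.card_le_card hins
    rwa [Finset.card_insert_of_notMem (by simpa using hj₀), Finset.card_range] at this
  have h2 : (Finset.univ.image (fun j : Fin k => (I j : ℕ))).card ≤ k := by
    simpa using Finset.card_image_le (s := (Finset.univ : Finset (Fin k)))
      (f := fun j : Fin k => (I j : ℕ))
  omega

lemma flip_sum (η : Fin k → Fin 2) (m : Fin k) :
    ((-1 : ℝ) ^ (∑ j, ((Function.update η m (η m + 1)) j : ℕ)))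
      = -((-1 : ℝ) ^ (∑ j, (η j : ℕ))) := by
  classical
  have hmem : m ∈ (Finset.univ : Finset (Fin k)) := Finset.mem_univ _
  rw [← Finset.add_sum_erase _ _ hmem, ← Finset.add_sum_erase _ (fun j => (η j : ℕ)) hmem]
  have hrest : ∑ j ∈ Finset.univ.erase m, ((Function.update η m (η m + 1)) j : ℕ)
      = ∑ j ∈ Finset.univ.erase m, (η j : ℕ) := by
    apply Finset.sum_congr rfl
    intro j hj
    rw [Function.update_of_ne (Finset.ne_of_mem_erase hj)]
  rw [hrest, Function.update_self]
  have hv : (η m : ℕ) < 2 := (η m).isLt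
  have hval : ((η m + 1 : Fin 2) : ℕ) = ((η m : ℕ) + 1) % 2 := by
    simp [Fin.add_def]
  rw [pow_add, pow_add, hval]
  have : (η m : ℕ) = 0 ∨ (η m : ℕ) = 1 := by omega
  rcases this with h0 | h1
  · rw [h0]; norm_num
  · rw [h1]; norm_num

end aux

/-- finite-difference rigidity for indexed k-Janossy latent maps:
the k-fold alternating difference in the first k coordinates is independent of
the tail variables. -/
theorem stmt_2 (d n k M : ℕ) (hk : 1 ≤ k) (hkn : k < n)
    (φ : (Fin k → Fin n) → (Fin k → unitCube d) → Fin M → ℝ)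
    (Φ : (Fin n → unitCube d) → Fin M → ℝ)
    (hΦ : ∀ x, Φ x = ∑ I : Fin k → Fin n, φ I (fun j => x (I j)))
    (a y : Fin k → Fin d → ℝ)
    (hm : ∀ (j : Fin k) (η : Fin 2), a j + (η : ℕ) • y j ∈ unitCube d)
    (x x' : Fin n → unitCube d) :
    (∑ η : Fin k → Fin 2, ((-1 : ℝ) ^ (∑ j, (η j : ℕ))) •
      Φ (fun i => if h : (i : ℕ) < k
          then ⟨a ⟨(i : ℕ), h⟩ + ((η ⟨(i : ℕ), h⟩ : ℕ)) • y ⟨(i : ℕ), h⟩, hm _ _⟩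
          else x i))
    = ∑ η : Fin k → Fin 2, ((-1 : ℝ) ^ (∑ j, (η j : ℕ))) •
      Φ (fun i => if h : (i : ℕ) < k
          then ⟨a ⟨(i : ℕ), h⟩ + ((η ⟨(i : ℕ), h⟩ : ℕ)) • y ⟨(i : ℕ), h⟩, hm _ _⟩
          else x' i) := by
  classical
  -- assembled point
  set X : (Fin k → Fin 2) → (Fin n → unitCube d) → (Fin n → unitCube d) :=
    fun η z i => if h : (i : ℕ) < k
        then ⟨a ⟨(i : ℕ), h⟩ + ((η ⟨(i : ℕ), h⟩ : ℕ)) • y ⟨(i : ℕ), h⟩, hm _ _⟩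
        else z i with hX
  show (∑ η : Fin k → Fin 2, ((-1 : ℝ) ^ (∑ j, (η j : ℕ))) • Φ (X η x))
      = ∑ η : Fin k → Fin 2, ((-1 : ℝ) ^ (∑ j, (η j : ℕ))) • Φ (X η x')
  simp only [hΦ, Finset.smul_sum]
  conv_lhs => rw [Finset.sum_comm]
  conv_rhs => rw [Finset.sum_comm]
  apply Finset.sum_congr rfl
  intro I _
  by_cases hall : ∀ j : Fin k, (I j : ℕ) < k
  · -- tail-independent term
    apply Finset.sum_congr rfl
    intro η _
    have harg : (fun j => X η x (I j)) = fun j => X η x' (I j) := by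
      funext j
      simp only [hX, dif_pos (hall j)]
    show _ • φ I (fun j => X η x (I j)) = _ • φ I (fun j => X η x' (I j))
    rw [harg]
  · -- some I j has value ≥ k : both sums vanish via a sign-flipping involution
    push_neg at hall
    obtain ⟨j₀, hj₀⟩ := hall
    obtain ⟨m, hmiss⟩ := exists_missed hk I j₀ (by omega)
    have key : ∀ z : Fin n → unitCube d,
        (∑ η : Fin k → Fin 2, ((-1 : ℝ) ^ (∑ j, (η j : ℕ))) •
          φ I (fun j => X η z (I j))) = 0 := by
      intro z
      apply Finset.sum_ninvolution (g := fun η => Function.update η m (η m + 1))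
      · intro η
        have harg : (fun j => X (Function.update η m (η m + 1)) z (I j))
            = fun j => X η z (I j) := by
          funext j
          simp only [hX]
          by_cases h : (I j : ℕ) < k
          · rw [dif_pos h, dif_pos h]
            have : (⟨(I j : ℕ), h⟩ : Fin k) ≠ m :=
              fun hc => hmiss j (congrArg Fin.val hc)
            rw [Function.update_of_ne this]
          · rw [dif_neg h, dif_neg h]
        rw [harg, flip_sum, neg_smul, add_neg_cancel]
      · intro η _
        intro hc
        have := congrFun hc m
        rw [Function.update_self] at this
        have h2 : ((η m + 1 : Fin 2) : ℕ) = ((η m : ℕ) + 1) % 2 := by simp [Fin.add_def]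
        have h3 := congrArg Fin.val this
        rw [h2] at h3
        omega
      · intro η; exact Finset.mem_univ _
      · intro η
        funext j
        by_cases h : j = m
        · subst h
          simp [Function.update_self]
          omega
        · rw [Function.update_of_ne h, Function.update_of_ne h]
    rw [key x, key x']
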